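/- arXiv:1702.06755 — 3 statements merged into one kernel-verified Lean document; each statement's English description precedes it below -/
import Mathlib

section
/- (Growth of ψ, consequence of (A2)) Let V be a real normed space, p ∈ (1,∞) with conjugate exponent p', C₂ > 0, and let ψ : V → [0,∞) be convex such that for every u ∈ V there exists a subgradient ξ_u ∈ V* of ψ at u with ‖ξ_u‖_{V*}^{p'} ≤ C₂(‖u‖_V^p + 1). Then there exists C₉ > 0 such that ψ(u) ≤ C₉(‖u‖_V^p + 1) for all u ∈ V. -/
/-- `ξ` is a subgradient of the real-valued convex function `g` at `u`. -/
def HasSubgradientAt {V : Type*} [NormedAddCommGroup V] [NormedSpace ℝ V]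
    (g : V → ℝ) (ξ : V →L[ℝ] ℝ) (u : V) : Prop :=
  ∀ v : V, g u + ξ (v - u) ≤ g v

/-- **Growth of `ψ` (consequence of (A2)).** -/
theorem psi_growth
    {V : Type*} [NormedAddCommGroup V] [NormedSpace ℝ V]
    (p C₂ : ℝ) (hp : 1 < p) (hC₂ : 0 < C₂)
    (ψ : V → ℝ) (hψ_nonneg : ∀ v, 0 ≤ ψ v) (hψ_conv : ConvexOn ℝ Set.univ ψ)
    (hsub : ∀ u : V, ∃ ξ : V →L[ℝ] ℝ, HasSubgradientAt ψ ξ u ∧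
      ‖ξ‖ ^ (p / (p - 1)) ≤ C₂ * (‖u‖ ^ p + 1)) :
    ∃ C₉ : ℝ, 0 < C₉ ∧ ∀ u : V, ψ u ≤ C₉ * (‖u‖ ^ p + 1) := by
  have hp0 : (0:ℝ) < p := lt_trans one_pos hp
  have hp1 : (0:ℝ) < p - 1 := by linarith
  set q : ℝ := p / (p - 1) with hq
  have hq0 : 0 < q := div_pos hp0 hp1
  refine ⟨ψ 0 + C₂ ^ (1/q) + 1, by have := hψ_nonneg 0; positivity, fun u => ?_⟩
  obtain ⟨ξ, hsubg, hbound⟩ := hsub u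
  set A : ℝ := ‖u‖ ^ p + 1 with hA
  have hApos : (0:ℝ) < A := by positivity
  have hA1 : (1:ℝ) ≤ A := by
    have : (0:ℝ) ≤ ‖u‖ ^ p := Real.rpow_nonneg (norm_nonneg u) p
    linarith
  -- ψ u ≤ ψ 0 + ‖ξ‖ * ‖u‖
  have h1 : ψ u ≤ ψ 0 + ‖ξ‖ * ‖u‖ := by
    have h := hsubg 0
    have h2 : ξ u ≤ ‖ξ‖ * ‖u‖ := (le_abs_self _).trans (ξ.le_opNorm u)
    simp only [zero_sub, map_neg] at h
    linarith
  -- ‖ξ‖ ≤ (C₂ * A) ^ (1/q)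
  have hξ : ‖ξ‖ ≤ (C₂ * A) ^ (1/q) := by
    have h := Real.rpow_le_rpow (by positivity) hbound (le_of_lt (one_div_pos.mpr hq0))
    rwa [← Real.rpow_mul (norm_nonneg ξ), mul_one_div,
      div_self (ne_of_gt hq0), Real.rpow_one] at h
  -- ‖u‖ ≤ A ^ (1/p)
  have hu : ‖u‖ ≤ A ^ (1/p) := by
    have h1 : ‖u‖ ^ p ≤ A := by
      have : (0:ℝ) ≤ 1 := one_pos.le
      simp [hA]
    have h2 := Real.rpow_le_rpow (Real.rpow_nonneg (norm_nonneg u) p) h1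
      (le_of_lt (one_div_pos.mpr hp0))
    rwa [← Real.rpow_mul (norm_nonneg u), mul_one_div, div_self (ne_of_gt hp0),
      Real.rpow_one] at h2
  -- combine
  have hsum : 1/q + 1/p = 1 := by
    rw [hq]; field_simp; ring
  have hprod : ‖ξ‖ * ‖u‖ ≤ C₂ ^ (1/q) * A := by
    calc ‖ξ‖ * ‖u‖ ≤ (C₂ * A) ^ (1/q) * (A ^ (1/p)) :=
          mul_le_mul hξ hu (norm_nonneg u) (by positivity)
      _ = C₂ ^ (1/q) * (A ^ (1/q) * A ^ (1/p)) := by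
          rw [Real.mul_rpow hC₂.le hApos.le]; ring
      _ = C₂ ^ (1/q) * A := by
          rw [← Real.rpow_add hApos, hsum, Real.rpow_one]
  have hC2q : (0:ℝ) ≤ C₂ ^ (1/q) := Real.rpow_nonneg hC₂.le _
  have hψ0 := hψ_nonneg 0
  nlinarith [mul_le_mul_of_nonneg_left hA1 hψ0, mul_le_mul_of_nonneg_left hA1 hC2q]
end

section
/- (Integrated power inequality) Let V be a real Banach space, p ∈ (1,∞) with conjugate exponent p', μ > 0, T > 0, and let w : [0,T] → V and w' : [0,T] → V be such that w' is Bochner integrable on (0,T), ∫₀ᵀ ‖w'(s)‖_V^p ds < ∞, and w(t) = w(0) + ∫₀ᵗ w'(s) ds for all t ∈ [0,T]. Then for every t ∈ [0,T]: μ‖w(t)‖_V^p ≤ μ‖w(0)‖_V^p + (p−1)μ^{p'} ∫₀ᵗ ‖w(s)‖_V^p ds + ∫₀ᵗ ‖w'(s)‖_V^p ds. -/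
open MeasureTheory Set

lemma aux_convex {p : ℝ} (hp : 1 < p) {a b : ℝ} (ha : 0 ≤ a) (hb : 0 ≤ b) :
    b ^ p - a ^ p ≤ p * b ^ (p - 1) * (b - a) := by
  have hp0 : (0:ℝ) < p := by linarith
  rcases eq_or_lt_of_le hb with hb0 | hb0
  · have hb0' : b = 0 := hb0.symm
    subst hb0'
    rw [Real.zero_rpow hp0.ne', Real.zero_rpow (by linarith : p - 1 ≠ 0)]
    have := Real.rpow_nonneg ha p
    nlinarith
  · have hs : -1 ≤ a / b - 1 := by
      have : 0 ≤ a / b := div_nonneg ha hb0.le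
      linarith
    have h1 := one_add_mul_self_le_rpow_one_add hs hp.le
    have e : (1 : ℝ) + (a / b - 1) = a / b := by ring
    rw [e, Real.div_rpow ha hb0.le] at h1
    have hBpos : (0:ℝ) < b ^ p := Real.rpow_pos_of_pos hb0 p
    have hc : b ^ (p - 1) * b = b ^ p := by
      rw [Real.rpow_sub_one hb0.ne', div_mul_cancel₀ _ hb0.ne']
    have h2 : b ^ p * (1 + p * (a / b - 1)) ≤ b ^ p * (a ^ p / b ^ p) :=
      mul_le_mul_of_nonneg_left h1 hBpos.le
    rw [mul_div_cancel₀ _ hBpos.ne'] at h2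
    have e2 : b ^ p * (1 + p * (a / b - 1)) = b ^ p + p * b ^ (p - 1) * (a - b) := by
      field_simp
      linear_combination (p * (b - a)) * hc
    rw [e2] at h2
    nlinarith [h2]

lemma aux_young {p μ : ℝ} (hp : 1 < p) (hμ : 0 < μ) {a b : ℝ} (ha : 0 ≤ a) (hb : 0 ≤ b) :
    μ * (p * a ^ (p - 1) * b) ≤ (p - 1) * μ ^ (p / (p - 1)) * a ^ p + b ^ p := by
  set q : ℝ := p / (p - 1) with hqdef
  have hpq : p.HolderConjugate q := Real.HolderConjugate.conjExponent hp
  have hqp : q.HolderConjugate p := hpq.symm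
  have hp0 : (0:ℝ) < p := by linarith
  have hp1 : (0:ℝ) < p - 1 := by linarith
  set x : ℝ := μ * p ^ ((p-1)/p) * a ^ (p - 1) with hxdef
  set y : ℝ := p ^ (1/p) * b with hydef
  have hxnn : 0 ≤ x := by positivity
  have hynn : 0 ≤ y := by positivity
  have hyoung := Real.young_inequality_of_nonneg hxnn hynn hqp
  have hprod : (p:ℝ) ^ ((p-1)/p) * p ^ (1/p) = p := by
    rw [← Real.rpow_add hp0]
    have h : (p-1)/p + 1/p = 1 := by field_simp; ring
    rw [h, Real.rpow_one]
  have hxy : x * y = μ * (p * a ^ (p - 1) * b) := by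
    rw [hxdef, hydef]
    linear_combination (μ * a ^ (p-1) * b) * hprod
  have hxq : x ^ q = μ ^ q * p * a ^ p := by
    rw [hxdef, Real.mul_rpow (by positivity) (Real.rpow_nonneg ha _),
      Real.mul_rpow hμ.le (by positivity), ← Real.rpow_mul hp0.le, ← Real.rpow_mul ha]
    have e1 : (p-1)/p * q = 1 := by rw [hqdef]; field_simp
    have e2 : (p-1) * q = p := by rw [hqdef]; field_simp
    rw [e1, e2, Real.rpow_one]
  have hyp : y ^ p = p * b ^ p := by
    rw [hydef, Real.mul_rpow (by positivity) hb, ← Real.rpow_mul hp0.le,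
      one_div, inv_mul_cancel₀ hp0.ne', Real.rpow_one]
  rw [hxy, hxq, hyp] at hyoung
  have hdiv : p / q = p - 1 := hpq.div_conj_eq_sub_one
  have e3 : μ ^ q * p * a ^ p / q = (p - 1) * μ ^ q * a ^ p := by
    have h4 : μ ^ q * p * a ^ p / q = μ ^ q * a ^ p * (p / q) := by
      ring
    rw [h4, hdiv]; ring
  have e4 : p * b ^ p / p = b ^ p := mul_div_cancel_left₀ _ hp0.ne'
  rw [e3, e4] at hyoung
  exact hyoung

/-- **Integrated power inequality.** -/
theorem integrated_power_inequality
    {V : Type*} [NormedAddCommGroup V] [NormedSpace ℝ V] [CompleteSpace V]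
    (p μ T : ℝ) (hp : 1 < p) (hμ : 0 < μ) (hT : 0 < T)
    (w w' : ℝ → V)
    (hw'int : IntegrableOn w' (Ioc 0 T))
    (hw'p : IntegrableOn (fun s => ‖w' s‖ ^ p) (Ioc 0 T))
    (hrep : ∀ t ∈ Icc (0:ℝ) T, w t = w 0 + ∫ s in Ioc (0:ℝ) t, w' s) :
    ∀ t ∈ Icc (0:ℝ) T,
      μ * ‖w t‖ ^ p ≤
        μ * ‖w 0‖ ^ p + (p - 1) * μ ^ (p / (p - 1)) * (∫ s in Ioc (0:ℝ) t, ‖w s‖ ^ p)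
          + ∫ s in Ioc (0:ℝ) t, ‖w' s‖ ^ p := by
  intro t ht
  obtain ⟨ht0, htT⟩ := ht
  have hp0 : (0:ℝ) < p := by linarith
  have hp1 : (0:ℝ) < p - 1 := by linarith
  have hgIoc : IntegrableOn (fun s => ‖w' s‖) (Ioc 0 T) := hw'int.norm
  have hgIcc : IntegrableOn (fun s => ‖w' s‖) (Icc 0 T) := by
    rw [integrableOn_Icc_iff_integrableOn_Ioc]; exact hgIoc
  have hw'Icc : IntegrableOn w' (Icc 0 T) := by
    rw [integrableOn_Icc_iff_integrableOn_Ioc]; exact hw'int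
  -- splitting lemma for real-valued integrands
  have hsplitR : ∀ (f : ℝ → ℝ), IntegrableOn f (Ioc (0:ℝ) T) → ∀ u v : ℝ,
      0 ≤ u → u ≤ v → v ≤ T →
      (∫ s in Ioc (0:ℝ) v, f s) = (∫ s in Ioc (0:ℝ) u, f s) + ∫ s in Ioc u v, f s := by
    intro f hf u v h0u huv hvT
    rw [← Ioc_union_Ioc_eq_Ioc h0u huv]
    exact setIntegral_union (Ioc_disjoint_Ioc_of_le le_rfl) measurableSet_Ioc
      (hf.mono_set (Ioc_subset_Ioc le_rfl (huv.trans hvT)))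
      (hf.mono_set (Ioc_subset_Ioc h0u hvT))
  have hsplitV : ∀ u v : ℝ, 0 ≤ u → u ≤ v → v ≤ T →
      (∫ s in Ioc (0:ℝ) v, w' s) = (∫ s in Ioc (0:ℝ) u, w' s) + ∫ s in Ioc u v, w' s := by
    intro u v h0u huv hvT
    rw [← Ioc_union_Ioc_eq_Ioc h0u huv]
    exact setIntegral_union (Ioc_disjoint_Ioc_of_le le_rfl) measurableSet_Ioc
      (hw'int.mono_set (Ioc_subset_Ioc le_rfl (huv.trans hvT)))
      (hw'int.mono_set (Ioc_subset_Ioc h0u hvT))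
  -- increments of the norm
  have hwv : ∀ u v : ℝ, 0 ≤ u → u ≤ v → v ≤ T →
      ‖w v‖ ≤ ‖w u‖ + ∫ s in Ioc u v, ‖w' s‖ := by
    intro u v h0u huv hvT
    have h1 : w v - w u = ∫ s in Ioc u v, w' s := by
      rw [hrep v ⟨h0u.trans huv, hvT⟩, hrep u ⟨h0u, huv.trans hvT⟩,
        hsplitV u v h0u huv hvT]
      abel
    have h2 : ‖w v - w u‖ ≤ ∫ s in Ioc u v, ‖w' s‖ := by
      rw [h1]; exact norm_integral_le_integral_norm _
    calc ‖w v‖ = ‖w u + (w v - w u)‖ := by congr 1; abel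
      _ ≤ ‖w u‖ + ‖w v - w u‖ := norm_add_le _ _
      _ ≤ ‖w u‖ + ∫ s in Ioc u v, ‖w' s‖ := by linarith
  set G : ℝ → ℝ := fun x => ∫ s in Ioc (0:ℝ) x, ‖w' s‖ with hGdef
  have hGcont : ContinuousOn G (Icc 0 T) := intervalIntegral.continuousOn_primitive hgIcc
  have hGmono : ∀ u v : ℝ, 0 ≤ u → u ≤ v → v ≤ T → G u ≤ G v := by
    intro u v h0u huv hvT
    have h1 := hsplitR _ hgIoc u v h0u huv hvT
    have h2 : 0 ≤ ∫ s in Ioc u v, ‖w' s‖ :=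
      setIntegral_nonneg measurableSet_Ioc fun s _ => norm_nonneg _
    simp only [hGdef]
    linarith [h1, h2]
  have hwcont : ContinuousOn w (Icc 0 T) := by
    have h1 : ContinuousOn (fun x => w 0 + ∫ s in Ioc (0:ℝ) x, w' s) (Icc 0 T) :=
      continuousOn_const.add (intervalIntegral.continuousOn_primitive hw'Icc)
    exact h1.congr fun x hx => hrep x hx
  set C : ℝ := ‖w 0‖ + G T with hCdef
  have hG0 : G 0 = 0 := by simp [hGdef]
  have hGT0 : 0 ≤ G T := by have := hGmono 0 T le_rfl hT.le le_rfl; linarith [hG0]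
  have hC0 : 0 ≤ C := by positivity
  have hfC : ∀ s ∈ Icc (0:ℝ) T, ‖w s‖ ≤ C := by
    intro s hs
    have h1 := hwv 0 s le_rfl hs.1 hs.2
    have h2 : G s ≤ G T := hGmono s T hs.1 hs.2 le_rfl
    simp only [hCdef]
    have : (∫ σ in Ioc (0:ℝ) s, ‖w' σ‖) = G s := rfl
    linarith [h1, h2, this]
  have hsubIcc : Icc (0:ℝ) t ⊆ Icc 0 T := Icc_subset_Icc le_rfl htT
  have hIoct : Ioc (0:ℝ) t ⊆ Icc 0 T := fun s hs => ⟨hs.1.le, hs.2.trans htT⟩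
  have hwnormp : ContinuousOn (fun s => ‖w s‖ ^ p) (Icc 0 T) :=
    hwcont.norm.rpow_const fun x _ => Or.inr hp0.le
  have hfpt : IntegrableOn (fun s => ‖w s‖ ^ p) (Ioc 0 t) :=
    (hwnormp.mono hsubIcc).integrableOn_Icc.mono_set Ioc_subset_Icc_self
  have hgpt : IntegrableOn (fun s => ‖w' s‖ ^ p) (Ioc 0 t) :=
    hw'p.mono_set (Ioc_subset_Ioc le_rfl htT)
  set K : ℝ := (p - 1) * μ ^ (p / (p - 1)) * (t * (p * (C + 1) ^ (p - 1))) with hKdef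
  have hK0 : 0 ≤ K := by positivity
  -- main ε-estimate
  have hmain : ∀ ε : ℝ, 0 < ε → ε ≤ 1 →
      μ * ‖w t‖ ^ p ≤
        μ * ‖w 0‖ ^ p + (p - 1) * μ ^ (p / (p - 1)) * (∫ s in Ioc (0:ℝ) t, ‖w s‖ ^ p)
          + (∫ s in Ioc (0:ℝ) t, ‖w' s‖ ^ p) + K * ε := by
    intro ε hε0 hε1
    set ρ : ℝ → ℝ := fun s => p * (‖w s‖ + ε) ^ (p - 1) * ‖w' s‖ with hρdef
    have hρ1cont : ContinuousOn (fun s => p * (‖w s‖ + ε) ^ (p - 1)) (Icc 0 T) :=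
      continuousOn_const.mul ((hwcont.norm.add continuousOn_const).rpow_const
        fun x _ => Or.inr (by linarith))
    have hρbound : ∀ s ∈ Icc (0:ℝ) T, p * (‖w s‖ + ε) ^ (p - 1) ≤ p * (C + 1) ^ (p - 1) := by
      intro s hs
      have h1 : ‖w s‖ + ε ≤ C + 1 := by
        have := hfC s hs; linarith
      have h2 : (‖w s‖ + ε) ^ (p - 1) ≤ (C + 1) ^ (p - 1) :=
        Real.rpow_le_rpow (by positivity) h1 (by linarith)
      exact mul_le_mul_of_nonneg_left h2 hp0.le
    have hρint : IntegrableOn ρ (Icc 0 T) := by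
      apply Integrable.bdd_mul (c := p * (C + 1) ^ (p - 1)) hgIcc
        (hρ1cont.aestronglyMeasurable measurableSet_Icc)
      filter_upwards [ae_restrict_mem measurableSet_Icc] with s hs
      rw [Real.norm_eq_abs, abs_of_nonneg (by positivity)]
      exact hρbound s hs
    -- Lemma A via continuous induction
    have hA : ‖w t‖ ^ p ≤ ‖w 0‖ ^ p + ∫ s in Ioc (0:ℝ) t, ρ s := by
      set S : Set ℝ := {x | x ∈ Icc (0:ℝ) t ∧
        ‖w x‖ ^ p ≤ ‖w 0‖ ^ p + ∫ s in Ioc (0:ℝ) x, ρ s} with hSdef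
      have hFcont : ContinuousOn (fun x => ‖w x‖ ^ p - ∫ s in Ioc (0:ℝ) x, ρ s) (Icc 0 t) :=
        (hwnormp.mono hsubIcc).sub (intervalIntegral.continuousOn_primitive (hρint.mono_set hsubIcc))
      have hSclosed : IsClosed (S ∩ Icc 0 t) := by
        have hSeq : S ∩ Icc 0 t = Icc (0:ℝ) t ∩
            (fun x => ‖w x‖ ^ p - ∫ s in Ioc (0:ℝ) x, ρ s) ⁻¹' (Iic (‖w 0‖ ^ p)) := by
          ext x
          constructor
          · rintro ⟨⟨hx1, hx2⟩, _⟩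
            exact ⟨hx1, by simp only [mem_preimage, mem_Iic]; linarith⟩
          · rintro ⟨hx1, hx2⟩
            simp only [mem_preimage, mem_Iic] at hx2
            exact ⟨⟨hx1, by linarith⟩, hx1⟩
        rw [hSeq]
        exact hFcont.preimage_isClosed_of_isClosed isClosed_Icc isClosed_Iic
      have h0S : 0 ∈ S := by
        refine ⟨⟨le_rfl, ht0⟩, ?_⟩
        simp
      have hstep : ∀ x ∈ S ∩ Ico 0 t, ∀ y ∈ Ioi x, (S ∩ Ioc x y).Nonempty := by
        rintro x ⟨⟨hxIcc, hxineq⟩, hxIco⟩ y hy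
        have hxT : x ∈ Icc (0:ℝ) T := hsubIcc hxIcc
        have hcw := hGcont x hxT
        rw [Metric.continuousWithinAt_iff] at hcw
        obtain ⟨δ, hδ0, hδ⟩ := hcw ε hε0
        set z : ℝ := min y (min (x + δ / 2) t) with hzdef
        have hxz : x < z := lt_min hy (lt_min (by linarith) hxIco.2)
        have hzt : z ≤ t := (min_le_right _ _).trans (min_le_right _ _)
        have hzy : z ≤ y := min_le_left _ _
        have hzT : z ≤ T := hzt.trans htT
        have hz0 : (0:ℝ) ≤ z := hxIcc.1.trans hxz.le
        have hGz : G z - G x < ε := by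
          have hdist : dist z x < δ := by
            rw [Real.dist_eq, abs_of_nonneg (by linarith)]
            have : z ≤ x + δ / 2 := (min_le_right _ _).trans (min_le_left _ _)
            linarith
          have h5 := hδ (⟨hz0, hzT⟩ : z ∈ Icc (0:ℝ) T) hdist
          rw [Real.dist_eq] at h5
          exact (abs_lt.mp h5).2
        have hkey : ∀ s ∈ Ioc x z, ‖w z‖ ≤ ‖w s‖ + ε := by
          intro s hs
          have hs0 : (0:ℝ) ≤ s := hxIcc.1.trans hs.1.le
          have h1 := hwv s z hs0 hs.2 hzT
          have h2 : (∫ σ in Ioc s z, ‖w' σ‖) = G z - G s := by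
            have h6 := hsplitR _ hgIoc s z hs0 hs.2 hzT
            simp only [hGdef] at h6 ⊢
            linarith
          have h3 : G x ≤ G s := hGmono x s hxIcc.1 hs.1.le (hs.2.trans hzT)
          have h4 : (∫ σ in Ioc s z, ‖w' σ‖) ≤ ε := by
            rw [h2]; linarith
          linarith
        have hwz0 : (0:ℝ) ≤ ‖w z‖ := norm_nonneg _
        have c1 : ‖w z‖ ^ p - ‖w x‖ ^ p ≤ p * ‖w z‖ ^ (p - 1) * (‖w z‖ - ‖w x‖) :=
          aux_convex hp (norm_nonneg _) hwz0
        have c2 : ‖w z‖ - ‖w x‖ ≤ ∫ σ in Ioc x z, ‖w' σ‖ := by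
          have := hwv x z hxIcc.1 hxz.le hzT; linarith
        have c3 : p * ‖w z‖ ^ (p - 1) * (‖w z‖ - ‖w x‖) ≤
            p * ‖w z‖ ^ (p - 1) * ∫ σ in Ioc x z, ‖w' σ‖ :=
          mul_le_mul_of_nonneg_left c2 (by positivity)
        have c4 : p * ‖w z‖ ^ (p - 1) * (∫ σ in Ioc x z, ‖w' σ‖) =
            ∫ σ in Ioc x z, p * ‖w z‖ ^ (p - 1) * ‖w' σ‖ :=
          (integral_const_mul _ _).symm
        have hIocsub : Ioc x z ⊆ Ioc 0 T := Ioc_subset_Ioc hxIcc.1 hzT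
        have c5 : (∫ σ in Ioc x z, p * ‖w z‖ ^ (p - 1) * ‖w' σ‖) ≤ ∫ σ in Ioc x z, ρ σ := by
          apply setIntegral_mono_on ((hgIoc.mono_set hIocsub).const_mul _)
            (hρint.mono_set (hIocsub.trans Ioc_subset_Icc_self)) measurableSet_Ioc
          intro s hs
          have h7 : ‖w z‖ ^ (p - 1) ≤ (‖w s‖ + ε) ^ (p - 1) :=
            Real.rpow_le_rpow hwz0 (hkey s hs) (by linarith)
          have h8 : p * ‖w z‖ ^ (p - 1) ≤ p * (‖w s‖ + ε) ^ (p - 1) :=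
            mul_le_mul_of_nonneg_left h7 hp0.le
          exact mul_le_mul_of_nonneg_right h8 (norm_nonneg _)
        have c6 : (∫ s in Ioc (0:ℝ) z, ρ s) = (∫ s in Ioc (0:ℝ) x, ρ s) + ∫ s in Ioc x z, ρ s :=
          hsplitR ρ (hρint.mono_set Ioc_subset_Icc_self) x z hxIcc.1 hxz.le hzT
        refine ⟨z, ⟨⟨hz0, hzt⟩, ?_⟩, hxz, hzy⟩
        have c7 : p * ‖w z‖ ^ (p - 1) * (∫ σ in Ioc x z, ‖w' σ‖) ≤ ∫ σ in Ioc x z, ρ σ :=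
          c4.le.trans c5
        linarith [hxineq, c1, c3, c7, c6]
      have hfinal : Icc (0:ℝ) t ⊆ S := hSclosed.Icc_subset_of_forall_exists_gt h0S hstep
      exact (hfinal ⟨ht0, le_rfl⟩).2
    -- Young's inequality under the integral
    have hρt : IntegrableOn ρ (Ioc 0 t) := hρint.mono_set hIoct
    have hfept : IntegrableOn (fun s => (‖w s‖ + ε) ^ p) (Ioc 0 t) :=
      (((hwcont.norm.add continuousOn_const).rpow_const
        (fun x _ => Or.inr hp0.le)).mono hsubIcc).integrableOn_Icc.mono_set Ioc_subset_Icc_self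
    have hB : μ * (∫ s in Ioc (0:ℝ) t, ρ s) ≤
        (p - 1) * μ ^ (p / (p - 1)) * (∫ s in Ioc (0:ℝ) t, (‖w s‖ + ε) ^ p)
          + ∫ s in Ioc (0:ℝ) t, ‖w' s‖ ^ p := by
      have h1 : μ * (∫ s in Ioc (0:ℝ) t, ρ s) = ∫ s in Ioc (0:ℝ) t, μ * ρ s :=
        (integral_const_mul _ _).symm
      have h2 : (∫ s in Ioc (0:ℝ) t, μ * ρ s) ≤
          ∫ s in Ioc (0:ℝ) t, ((p - 1) * μ ^ (p / (p - 1)) * (‖w s‖ + ε) ^ p + ‖w' s‖ ^ p) := by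
        apply setIntegral_mono_on (hρt.const_mul μ)
          ((hfept.const_mul _).add hgpt) measurableSet_Ioc
        intro s _
        exact aux_young hp hμ (by positivity) (norm_nonneg _)
      have h3 : (∫ s in Ioc (0:ℝ) t, ((p - 1) * μ ^ (p / (p - 1)) * (‖w s‖ + ε) ^ p + ‖w' s‖ ^ p))
          = (p - 1) * μ ^ (p / (p - 1)) * (∫ s in Ioc (0:ℝ) t, (‖w s‖ + ε) ^ p)
            + ∫ s in Ioc (0:ℝ) t, ‖w' s‖ ^ p := by
        rw [integral_add (hfept.const_mul _) hgpt, integral_const_mul]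
      linarith [h1, h2, h3]
    -- replace (‖w s‖+ε)^p by ‖w s‖^p + correction
    have hC : (∫ s in Ioc (0:ℝ) t, (‖w s‖ + ε) ^ p) ≤
        (∫ s in Ioc (0:ℝ) t, ‖w s‖ ^ p) + t * (p * (C + 1) ^ (p - 1)) * ε := by
      have hconst : IntegrableOn (fun _ : ℝ => p * (C + 1) ^ (p - 1) * ε) (Ioc 0 t) :=
        integrableOn_const measure_Ioc_lt_top.ne
      have h1 : (∫ s in Ioc (0:ℝ) t, (‖w s‖ + ε) ^ p) ≤
          ∫ s in Ioc (0:ℝ) t, (‖w s‖ ^ p + p * (C + 1) ^ (p - 1) * ε) := by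
        apply setIntegral_mono_on hfept (hfpt.add hconst) measurableSet_Ioc
        intro s hs
        have hsT : s ∈ Icc (0:ℝ) T := hIoct hs
        have h2 : (‖w s‖ + ε) ^ p - ‖w s‖ ^ p ≤
            p * (‖w s‖ + ε) ^ (p - 1) * ((‖w s‖ + ε) - ‖w s‖) :=
          aux_convex hp (norm_nonneg _) (by positivity)
        have h3 : (‖w s‖ + ε) ^ (p - 1) ≤ (C + 1) ^ (p - 1) :=
          Real.rpow_le_rpow (by positivity) (by have := hfC s hsT; linarith) (by linarith)
        have h4 : p * (‖w s‖ + ε) ^ (p - 1) * ε ≤ p * (C + 1) ^ (p - 1) * ε := by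
          have := mul_le_mul_of_nonneg_left h3 hp0.le
          exact mul_le_mul_of_nonneg_right this hε0.le
        have h5 : (‖w s‖ + ε) - ‖w s‖ = ε := by ring
        rw [h5] at h2
        have h9 : (‖w s‖ + ε) ^ p ≤ ‖w s‖ ^ p + p * (C + 1) ^ (p - 1) * ε := by linarith
        exact h9
      have h6 : (∫ s in Ioc (0:ℝ) t, (‖w s‖ ^ p + p * (C + 1) ^ (p - 1) * ε))
          = (∫ s in Ioc (0:ℝ) t, ‖w s‖ ^ p) + t * (p * (C + 1) ^ (p - 1) * ε) := by
        rw [integral_add hfpt hconst, setIntegral_const, smul_eq_mul,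
          Real.volume_real_Ioc_of_le ht0]
        ring_nf
      rw [h6] at h1
      linarith
    -- combine
    have hq0 : (0:ℝ) < μ ^ (p / (p - 1)) := Real.rpow_pos_of_pos hμ _
    have hmul := mul_le_mul_of_nonneg_left hA hμ.le
    have hfinal2 : μ * ‖w 0‖ ^ p + μ * (∫ s in Ioc (0:ℝ) t, ρ s) ≤
        μ * ‖w 0‖ ^ p + (p - 1) * μ ^ (p / (p - 1)) * (∫ s in Ioc (0:ℝ) t, ‖w s‖ ^ p)
          + (∫ s in Ioc (0:ℝ) t, ‖w' s‖ ^ p) + K * ε := by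
      have h7 : (p - 1) * μ ^ (p / (p - 1)) * (∫ s in Ioc (0:ℝ) t, (‖w s‖ + ε) ^ p) ≤
          (p - 1) * μ ^ (p / (p - 1)) * ((∫ s in Ioc (0:ℝ) t, ‖w s‖ ^ p)
            + t * (p * (C + 1) ^ (p - 1)) * ε) :=
        mul_le_mul_of_nonneg_left hC (by positivity)
      have h8 : (p - 1) * μ ^ (p / (p - 1)) * ((∫ s in Ioc (0:ℝ) t, ‖w s‖ ^ p)
            + t * (p * (C + 1) ^ (p - 1)) * ε)
          = (p - 1) * μ ^ (p / (p - 1)) * (∫ s in Ioc (0:ℝ) t, ‖w s‖ ^ p) + K * ε := by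
        rw [hKdef]; ring
      linarith [hB, h7, h8]
    calc μ * ‖w t‖ ^ p ≤ μ * (‖w 0‖ ^ p + ∫ s in Ioc (0:ℝ) t, ρ s) := hmul
      _ = μ * ‖w 0‖ ^ p + μ * (∫ s in Ioc (0:ℝ) t, ρ s) := by ring
      _ ≤ _ := hfinal2
  -- take ε → 0
  by_contra hcon
  push_neg at hcon
  set L : ℝ := μ * ‖w t‖ ^ p with hLdef
  set R : ℝ := μ * ‖w 0‖ ^ p + (p - 1) * μ ^ (p / (p - 1)) * (∫ s in Ioc (0:ℝ) t, ‖w s‖ ^ p)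
      + ∫ s in Ioc (0:ℝ) t, ‖w' s‖ ^ p with hRdef
  have hLR : R < L := hcon
  clear_value L R
  set ε : ℝ := min 1 ((L - R) / (2 * (K + 1))) with hεdef
  have hε0 : 0 < ε := lt_min one_pos (div_pos (by linarith) (by positivity))
  have hε1 : ε ≤ 1 := min_le_left _ _
  have h9 := hmain ε hε0 hε1
  have h11 : ε ≤ (L - R) / (2 * (K + 1)) := min_le_right _ _
  clear_value ε
  have h10 : K * ε ≤ (L - R) / 2 := by
    have h12 : K * ε ≤ K * ((L - R) / (2 * (K + 1))) := mul_le_mul_of_nonneg_left h11 hK0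
    have h13 : K * ((L - R) / (2 * (K + 1))) ≤ (L - R) / 2 := by
      have e : K * ((L - R) / (2 * (K + 1))) = (K * (L - R)) / (2 * (K + 1)) := by ring
      rw [e, div_le_div_iff₀ (by positivity : (0:ℝ) < 2 * (K + 1)) (by norm_num : (0:ℝ) < 2)]
      nlinarith [hK0, hLR]
    linarith
  have : L ≤ R + K * ε := h9
  linarith
end

section
/- (Demicontinuity of the Yosida approximation) Let V be a separable, reflexive, strictly convex real Banach space whose dual V* is strictly convex (reflexivity meaning the canonical embedding of V into its double dual is surjective), let p ∈ (1,∞), λ > 0, and let φ : V → [0,∞] be a proper, lower semicontinuous, convex function with φ(0) < ∞. For u ∈ V call (v, ξ) ∈ V × V* a resolvent pair for u if ξ is a subgradient of w ↦ ‖w‖_V^p/p at (v−u)/λ and −ξ is a subgradient of φ at v. Suppose u_n → u strongly in V, that (v_n, ξ_n) is a resolvent pair for u_n for each n, and that (v, ξ) is a resolvent pair for u. Then v_n → v weakly in V (⟨g, v_n⟩ → ⟨g, v⟩ for all g ∈ V*) and ξ_n → ξ weakly in V* (⟨ξ_n, z⟩ → ⟨ξ, z⟩ for all z ∈ V). -/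
set_option maxHeartbeats 1000000


open Filter ENNReal

/-- `ξ` is a subgradient of the `[0,∞]`-valued convex function `φ` at `u`. -/
def ESubgradientAt {V : Type*} [NormedAddCommGroup V] [NormedSpace ℝ V]
    (φ : V → ℝ≥0∞) (u : V) (ξ : V →L[ℝ] ℝ) : Prop :=
  φ u ≠ ⊤ ∧ ∀ v : V, φ v ≠ ⊤ → (φ u).toReal + ξ (v - u) ≤ (φ v).toReal

/-- `(v, ξ)` is a resolvent pair for `u` (with parameters `p`, `lam`):
`ξ` is a subgradient of `w ↦ ‖w‖^p/p` at `(v - u)/lam` and `-ξ` is a subgradient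
of `φ` at `v`. -/
def IsResolventPair {V : Type*} [NormedAddCommGroup V] [NormedSpace ℝ V]
    (p lam : ℝ) (φ : V → ℝ≥0∞) (u v : V) (ξ : V →L[ℝ] ℝ) : Prop :=
  HasSubgradientAt (fun w : V => ‖w‖ ^ p / p) ξ (lam⁻¹ • (v - u)) ∧
    ESubgradientAt φ v (-ξ)

section YosidaAux

variable {V : Type*} [NormedAddCommGroup V] [NormedSpace ℝ V]

lemma subgrad_apply {p : ℝ} (hp : 1 < p) {w0 : V} {ξ : V →L[ℝ] ℝ}
    (h : HasSubgradientAt (fun w : V => ‖w‖ ^ p / p) ξ w0) : ξ w0 = ‖w0‖ ^ p := by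
  have hp0 : (0:ℝ) < p := lt_trans one_pos hp
  set F : ℝ → ℝ := fun t => t ^ p * (‖w0‖ ^ p / p) - ‖w0‖ ^ p / p - (t - 1) * ξ w0 with hF
  have hF1 : F 1 = 0 := by simp [hF, Real.one_rpow]
  have hFnonneg : ∀ t ∈ Set.Ioi (0:ℝ), 0 ≤ F t := by
    intro t ht
    have h0 := h (t • w0)
    simp only at h0
    have hnorm : ‖t • w0‖ ^ p = t ^ p * ‖w0‖ ^ p := by
      rw [norm_smul, Real.norm_eq_abs, abs_of_pos ht, Real.mul_rpow (le_of_lt ht) (norm_nonneg _)]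
    have happ : ξ (t • w0 - w0) = (t - 1) * ξ w0 := by
      rw [map_sub, map_smul]; simp [smul_eq_mul]; ring
    rw [hnorm, happ, mul_div_assoc] at h0
    simp only [hF]
    linarith
  have hmin : IsLocalMin F 1 := by
    filter_upwards [Ioi_mem_nhds (one_pos : (0:ℝ) < 1)] with t ht
    rw [hF1]; exact hFnonneg t ht
  have hd : HasDerivAt F (p * 1 ^ (p - 1) * (‖w0‖ ^ p / p) - 0 - 1 * ξ w0) 1 := by
    apply HasDerivAt.sub
    apply HasDerivAt.sub
    · exact (Real.hasDerivAt_rpow_const (Or.inr hp.le)).mul_const _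
    · exact hasDerivAt_const _ _
    · exact ((hasDerivAt_id 1).sub_const 1).mul_const _
  have hz := hmin.hasDerivAt_eq_zero hd
  rw [Real.one_rpow] at hz
  field_simp at hz
  linarith

lemma subgrad_norm {p : ℝ} (hp : 1 < p) {w0 : V} {ξ : V →L[ℝ] ℝ}
    (h : HasSubgradientAt (fun w : V => ‖w‖ ^ p / p) ξ w0) : ‖ξ‖ = ‖w0‖ ^ (p - 1) := by
  have hp0 : (0:ℝ) < p := lt_trans one_pos hp
  have key : ∀ z : V, ξ z ≤ ‖w0‖ ^ (p - 1) * ‖z‖ := by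
    intro z
    set c := ‖w0‖ with hc
    have hc0 : 0 ≤ c := norm_nonneg _
    set G : ℝ → ℝ := fun t => (c + t * ‖z‖) ^ p with hG
    have hineq : ∀ t ∈ Set.Ioi (0:ℝ), ξ z ≤ slope G 0 t / p := by
      intro t ht
      rw [Set.mem_Ioi] at ht
      have h1 := h (w0 + t • z)
      simp only at h1
      have h2 : ξ (w0 + t • z - w0) = t * ξ z := by
        rw [add_sub_cancel_left, map_smul]; simp [smul_eq_mul]
      rw [h2] at h1
      have h3 : ‖w0 + t • z‖ ≤ c + t * ‖z‖ := by
        calc ‖w0 + t • z‖ ≤ ‖w0‖ + ‖t • z‖ := norm_add_le _ _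
        _ = c + t * ‖z‖ := by rw [norm_smul, Real.norm_eq_abs, abs_of_pos ht]
      have h4 : ‖w0 + t • z‖ ^ p ≤ (c + t * ‖z‖) ^ p :=
        Real.rpow_le_rpow (norm_nonneg _) h3 hp0.le
      have h5 : c ^ p / p + t * ξ z ≤ (c + t * ‖z‖) ^ p / p :=
        le_trans h1 (by gcongr)
      have hslope : slope G 0 t = ((c + t * ‖z‖) ^ p - c ^ p) / t := by
        simp [slope_def_field, hG]
      rw [hslope, div_div, le_div_iff₀ (mul_pos ht hp0)]
      have h5' : c ^ p + t * ξ z * p ≤ (c + t * ‖z‖) ^ p := by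
        have h6 := mul_le_mul_of_nonneg_right h5 hp0.le
        rw [add_mul, div_mul_cancel₀ _ (ne_of_gt hp0), div_mul_cancel₀ _ (ne_of_gt hp0)] at h6
        linarith
      linarith
    have hder : HasDerivAt G (p * c ^ (p - 1) * ‖z‖) 0 := by
      have hinner : HasDerivAt (fun t : ℝ => c + t * ‖z‖) ‖z‖ 0 := by
        simpa using ((hasDerivAt_id (0:ℝ)).mul_const ‖z‖).const_add c
      have houter : HasDerivAt (fun x : ℝ => x ^ p) (p * c ^ (p - 1)) (c + 0 * ‖z‖) := by
        simpa using Real.hasDerivAt_rpow_const (p := p) (x := c) (Or.inr hp.le)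
      exact houter.comp 0 hinner
    have hslopetendsto : Tendsto (fun t => slope G 0 t / p) (nhdsWithin 0 (Set.Ioi 0))
        (nhds ((p * c ^ (p - 1) * ‖z‖) / p)) := by
      have h6 : Tendsto (slope G 0) (nhdsWithin 0 {0}ᶜ) (nhds (p * c ^ (p - 1) * ‖z‖)) :=
        hasDerivAt_iff_tendsto_slope.1 hder
      exact (h6.mono_left (nhdsWithin_mono _ (fun x hx => ne_of_gt hx))).div_const p
    have hle := ge_of_tendsto hslopetendsto
      (eventually_nhdsWithin_of_forall (fun t ht => hineq t ht))
    calc ξ z ≤ (p * c ^ (p - 1) * ‖z‖) / p := hle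
    _ = c ^ (p - 1) * ‖z‖ := by
        rw [mul_comm p, mul_assoc, mul_comm p, ← mul_assoc, mul_div_assoc,
          div_self (ne_of_gt hp0), mul_one]
  have hupper : ‖ξ‖ ≤ ‖w0‖ ^ (p - 1) := by
    apply ContinuousLinearMap.opNorm_le_bound _ (Real.rpow_nonneg (norm_nonneg _) _)
    intro z
    rw [Real.norm_eq_abs, abs_le]
    constructor
    · have hkz := key (-z); rw [map_neg, norm_neg] at hkz; linarith
    · exact key z
  rcases eq_or_ne w0 0 with hw | hw
  · have h0 : ‖ξ‖ ≤ 0 := by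
      simpa [hw, Real.zero_rpow (by linarith : p - 1 ≠ 0)] using hupper
    simp [hw, Real.zero_rpow (by linarith : p - 1 ≠ 0), le_antisymm h0 (norm_nonneg _)]
  · refine le_antisymm hupper ?_
    have hw0 : (0:ℝ) < ‖w0‖ := norm_pos_iff.2 hw
    have h1 : ‖w0‖ ^ p ≤ ‖ξ‖ * ‖w0‖ := by
      rw [← subgrad_apply hp h]
      calc ξ w0 ≤ |ξ w0| := le_abs_self _
      _ ≤ ‖ξ‖ * ‖w0‖ := ξ.le_opNorm w0
    have h2 : ‖w0‖ ^ p = ‖w0‖ ^ (p - 1) * ‖w0‖ := by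
      rw [← Real.rpow_add_one (ne_of_gt hw0) (p - 1), sub_add_cancel]
    rw [h2] at h1
    exact le_of_mul_le_mul_right h1 hw0

lemma norming_eq {X : Type*} [NormedAddCommGroup X] [NormedSpace ℝ X] [StrictConvexSpace ℝ X]
    (f : X →L[ℝ] ℝ) {x y : X} (hx : f x = ‖f‖ * ‖x‖) (hy : f y = ‖f‖ * ‖x‖)
    (hyx : ‖y‖ ≤ ‖x‖) (hf : ‖f‖ ≠ 0) (hx0 : x ≠ 0) : y = x := by
  have hf0 : 0 < ‖f‖ := lt_of_le_of_ne (norm_nonneg _) (Ne.symm hf)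
  have hxn : 0 < ‖x‖ := norm_pos_iff.2 hx0
  have h1 : f y ≤ ‖f‖ * ‖y‖ := le_trans (le_abs_self _) (f.le_opNorm y)
  have hxy : ‖x‖ = ‖y‖ := by
    rw [hy] at h1
    have := le_of_mul_le_mul_left h1 hf0
    linarith
  have h2 : f (x + y) = ‖f‖ * (‖x‖ + ‖y‖) := by
    rw [map_add, hx, hy, ← hxy]; ring
  have h3 : f (x + y) ≤ ‖f‖ * ‖x + y‖ := le_trans (le_abs_self _) (f.le_opNorm _)
  have h4 : ‖x‖ + ‖y‖ ≤ ‖x + y‖ := by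
    rw [h2] at h3
    exact le_of_mul_le_mul_left h3 hf0
  exact (eq_of_norm_eq_of_norm_add_eq hxy (le_antisymm (norm_add_le _ _) h4)).symm

lemma seq_tendsto_of_prod {p b : ℝ} (hp : 1 < p) (hb : 0 ≤ b) {a : ℕ → ℝ}
    (ha : ∀ n, 0 ≤ a n)
    (h : Tendsto (fun n => (a n ^ (p - 1) - b ^ (p - 1)) * (a n - b)) atTop (nhds 0)) :
    Tendsto a atTop (nhds b) := by
  have hq : (0:ℝ) < p - 1 := by linarith
  rw [Metric.tendsto_atTop]
  intro ε hε
  set δ₁ : ℝ := ((b + ε) ^ (p - 1) - b ^ (p - 1)) * ε with hδ₁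
  have hδ₁pos : 0 < δ₁ := by
    apply mul_pos _ hε
    have := Real.rpow_lt_rpow hb (lt_add_of_pos_right b hε) hq
    linarith
  have hupper : ∀ n, b + ε ≤ a n → δ₁ ≤ (a n ^ (p - 1) - b ^ (p - 1)) * (a n - b) := by
    intro n hn
    have hf1 : (b + ε) ^ (p - 1) - b ^ (p - 1) ≤ a n ^ (p - 1) - b ^ (p - 1) := by
      have := Real.rpow_le_rpow (by linarith) hn hq.le
      linarith
    have hf1' : 0 ≤ (b + ε) ^ (p - 1) - b ^ (p - 1) := by
      have := Real.rpow_le_rpow hb (by linarith : b ≤ b + ε) hq.le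
      linarith
    exact mul_le_mul hf1 (by linarith) hε.le (by linarith)
  by_cases hεb : ε ≤ b
  · set δ₂ : ℝ := (b ^ (p - 1) - (b - ε) ^ (p - 1)) * ε with hδ₂
    have hδ₂pos : 0 < δ₂ := by
      apply mul_pos _ hε
      have := Real.rpow_lt_rpow (by linarith : (0:ℝ) ≤ b - ε) (by linarith : b - ε < b) hq
      linarith
    obtain ⟨N, hN⟩ := (Metric.tendsto_atTop.1 h) (min δ₁ δ₂) (lt_min hδ₁pos hδ₂pos)
    refine ⟨N, fun n hn => ?_⟩
    have hD : (a n ^ (p - 1) - b ^ (p - 1)) * (a n - b) < min δ₁ δ₂ := by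
      have := hN n hn
      rw [Real.dist_eq, sub_zero] at this
      exact lt_of_abs_lt this
    rw [Real.dist_eq, abs_sub_lt_iff]
    constructor
    · by_contra hcon
      push_neg at hcon
      have := hupper n (by linarith)
      have := min_le_left δ₁ δ₂
      linarith
    · by_contra hcon
      push_neg at hcon
      have han : a n ≤ b - ε := by linarith
      have hlow : δ₂ ≤ (a n ^ (p - 1) - b ^ (p - 1)) * (a n - b) := by
        have heq : (a n ^ (p - 1) - b ^ (p - 1)) * (a n - b)
            = (b ^ (p - 1) - a n ^ (p - 1)) * (b - a n) := by ring
        rw [heq]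
        have hf1 : b ^ (p - 1) - (b - ε) ^ (p - 1) ≤ b ^ (p - 1) - a n ^ (p - 1) := by
          have := Real.rpow_le_rpow (ha n) han hq.le
          linarith
        have hf1' : 0 ≤ b ^ (p - 1) - (b - ε) ^ (p - 1) := by
          have := Real.rpow_le_rpow (by linarith : (0:ℝ) ≤ b - ε) (by linarith : b - ε ≤ b) hq.le
          linarith
        exact mul_le_mul hf1 (by linarith) hε.le (by linarith)
      have := min_le_right δ₁ δ₂
      linarith
  · push_neg at hεb
    obtain ⟨N, hN⟩ := (Metric.tendsto_atTop.1 h) δ₁ hδ₁pos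
    refine ⟨N, fun n hn => ?_⟩
    have hD : (a n ^ (p - 1) - b ^ (p - 1)) * (a n - b) < δ₁ := by
      have := hN n hn
      rw [Real.dist_eq, sub_zero] at this
      exact lt_of_abs_lt this
    rw [Real.dist_eq, abs_sub_lt_iff]
    constructor
    · by_contra hcon
      push_neg at hcon
      have := hupper n (by linarith)
      linarith
    · have := ha n; linarith

lemma rpow_split {p : ℝ} (hp : 1 < p) {x : ℝ} (hx : 0 ≤ x) : x ^ p = x ^ (p - 1) * x := by
  rcases eq_or_lt_of_le hx with h | h
  · rw [← h, Real.zero_rpow (by linarith : p ≠ 0),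
      Real.zero_rpow (by linarith : p - 1 ≠ 0), zero_mul]
  · rw [← Real.rpow_add_one (ne_of_gt h) (p - 1), sub_add_cancel]

end YosidaAux

/-- **Demicontinuity of the Yosida approximation.** -/
theorem yosida_demicontinuous
    {V : Type*} [NormedAddCommGroup V] [NormedSpace ℝ V]
    [TopologicalSpace.SeparableSpace V]
    [StrictConvexSpace ℝ V] [StrictConvexSpace ℝ (V →L[ℝ] ℝ)]
    (hrefl : Function.Surjective (NormedSpace.inclusionInDoubleDual ℝ V))
    (p lam : ℝ) (hp : 1 < p) (hlam : 0 < lam)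
    (φ : V → ℝ≥0∞) (hφproper : ∃ v, φ v ≠ ⊤)
    (hφlsc : LowerSemicontinuous φ)
    (hφconv : ∀ u v : V, ∀ a b : ℝ, 0 ≤ a → 0 ≤ b → a + b = 1 →
      φ (a • u + b • v) ≤ ENNReal.ofReal a * φ u + ENNReal.ofReal b * φ v)
    (hφ0 : φ 0 ≠ ⊤)
    (u : V) (un : ℕ → V) (v : V) (vn : ℕ → V)
    (ξ : V →L[ℝ] ℝ) (ξn : ℕ → V →L[ℝ] ℝ)
    (hun : Tendsto un atTop (nhds u))
    (hpairn : ∀ n, IsResolventPair p lam φ (un n) (vn n) (ξn n))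
    (hpair : IsResolventPair p lam φ u v ξ) :
    (∀ g : V →L[ℝ] ℝ, Tendsto (fun n => g (vn n)) atTop (nhds (g v))) ∧
      (∀ z : V, Tendsto (fun n => ξn n z) atTop (nhds (ξ z))) := by
  obtain ⟨hξsub, hφsub⟩ := hpair
  have hp0 : (0:ℝ) < p := lt_trans one_pos hp
  have hq0 : (0:ℝ) < p - 1 := by linarith
  have hlam' : lam ≠ 0 := ne_of_gt hlam
  set w : V := lam⁻¹ • (v - u) with hwdef
  set wn : ℕ → V := fun n => lam⁻¹ • (vn n - un n) with hwndef
  have hv : v = u + lam • w := by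
    rw [hwdef, smul_inv_smul₀ hlam']; abel
  have hvn : ∀ n, vn n = un n + lam • wn n := by
    intro n; rw [hwndef]; simp only; rw [smul_inv_smul₀ hlam']; abel
  set b : ℝ := ‖w‖ with hbdef
  set a : ℕ → ℝ := fun n => ‖wn n‖ with hadef
  have hb0 : 0 ≤ b := norm_nonneg _
  have ha0 : ∀ n, 0 ≤ a n := fun n => norm_nonneg _
  have hξw : ξ w = b ^ p := subgrad_apply hp hξsub
  have hξnorm : ‖ξ‖ = b ^ (p - 1) := subgrad_norm hp hξsub
  have hξnw : ∀ n, ξn n (wn n) = a n ^ p := fun n => subgrad_apply hp (hpairn n).1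
  have hξnnorm : ∀ n, ‖ξn n‖ = a n ^ (p - 1) := fun n => subgrad_norm hp (hpairn n).1
  -- bound on ‖un‖
  obtain ⟨M, hM⟩ : ∃ M, ∀ n, ‖un n‖ ≤ M := by
    obtain ⟨M, hM⟩ := hun.norm.bddAbove_range
    exact ⟨M, fun n => hM ⟨n, rfl⟩⟩
  have hM0 : 0 ≤ M := le_trans (norm_nonneg _) (hM 0)
  set C : ℝ := (φ 0).toReal with hCdef
  have hC0 : 0 ≤ C := ENNReal.toReal_nonneg
  have hbound1 : ∀ n, ξn n (vn n) ≤ C := by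
    intro n
    have h1 := (hpairn n).2.2 0 hφ0
    simp only [ContinuousLinearMap.neg_apply, zero_sub, map_neg, neg_neg] at h1
    have h2 : (0:ℝ) ≤ (φ (vn n)).toReal := ENNReal.toReal_nonneg
    linarith
  have hbound2 : ∀ n, lam * a n ^ p ≤ C + a n ^ (p - 1) * M := by
    intro n
    have h1 : ξn n (vn n) = ξn n (un n) + lam * ξn n (wn n) := by
      conv_lhs => rw [hvn n]
      rw [map_add, map_smul, smul_eq_mul]
    have habs : |ξn n (un n)| ≤ a n ^ (p - 1) * M := by
      calc |ξn n (un n)| ≤ ‖ξn n‖ * ‖un n‖ := (ξn n).le_opNorm _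
      _ ≤ a n ^ (p - 1) * M := by
          rw [hξnnorm n]
          exact mul_le_mul_of_nonneg_left (hM n) (Real.rpow_nonneg (ha0 n) _)
    have h3 := hbound1 n
    rw [h1, hξnw n] at h3
    linarith [neg_abs_le (ξn n (un n))]
  obtain ⟨R, hR1, hRn⟩ : ∃ R ≥ 1, ∀ n, a n ≤ R := by
    refine ⟨max (max 1 (2 * M / lam)) ((2 * C / lam) ^ p⁻¹),
      le_trans (le_max_left _ _) (le_max_left _ _), fun n => ?_⟩
    by_contra hcon
    push_neg at hcon
    have h1 : 1 < a n := lt_of_le_of_lt (le_trans (le_max_left _ _) (le_max_left _ _)) hcon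
    have h2 : 2 * M / lam < a n :=
      lt_of_le_of_lt (le_trans (le_max_right _ _) (le_max_left _ _)) hcon
    have h3 : (2 * C / lam) ^ p⁻¹ < a n := lt_of_le_of_lt (le_max_right _ _) hcon
    have ha' : 0 < a n := lt_trans one_pos h1
    have hsplit := rpow_split hp (le_of_lt ha')
    have hMa : a n ^ (p - 1) * M ≤ a n ^ (p - 1) * (lam * a n / 2) := by
      apply mul_le_mul_of_nonneg_left _ (Real.rpow_nonneg (ha0 n) _)
      rw [div_lt_iff₀ hlam] at h2
      linarith
    have h4 : a n ^ p ≤ 2 * C / lam := by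
      have h5 := hbound2 n
      rw [le_div_iff₀ hlam]
      nlinarith
    have h6 : a n ≤ (2 * C / lam) ^ p⁻¹ := by
      have h7 := Real.rpow_le_rpow (Real.rpow_nonneg (ha0 n) _) h4 (inv_nonneg.2 hp0.le)
      rwa [Real.rpow_rpow_inv (ha0 n) (ne_of_gt hp0)] at h7
    linarith
  have hR0 : (0:ℝ) < R := lt_of_lt_of_le one_pos hR1
  have hK : ∀ n, ‖ξn n‖ ≤ R ^ (p - 1) := fun n => by
    rw [hξnnorm n]; exact Real.rpow_le_rpow (ha0 n) (hRn n) hq0.le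
  -- monotonicity
  set B : ℕ → ℝ := fun n => ξn n (wn n - w) - ξ (wn n - w) with hBdef
  have hBnonneg : ∀ n, 0 ≤ B n := by
    intro n
    have h1 := hξsub (wn n)
    have h2 := (hpairn n).1 w
    simp only at h1 h2
    have h3 : ξn n (w - wn n) = -(ξn n (wn n - w)) := by rw [← neg_sub, map_neg]
    simp only [hBdef]
    linarith
  have hAle : ∀ n, ξn n (vn n - v) - ξ (vn n - v) ≤ 0 := by
    intro n
    have h1 := hφsub.2 (vn n) ((hpairn n).2.1)
    have h2 := (hpairn n).2.2 v hφsub.1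
    simp only [ContinuousLinearMap.neg_apply] at h1 h2
    have h3 : ξn n (v - vn n) = -(ξn n (vn n - v)) := by rw [← neg_sub, map_neg]
    linarith
  have hBle : ∀ n, lam * B n ≤ (R ^ (p - 1) + ‖ξ‖) * ‖un n - u‖ := by
    intro n
    have h1 : lam • (wn n - w) = (vn n - v) - (un n - u) := by
      rw [smul_sub, hwndef, hwdef]
      simp only
      rw [smul_inv_smul₀ hlam', smul_inv_smul₀ hlam']
      abel
    have h2 : lam * B n = (ξn n (vn n - v) - ξ (vn n - v))
        - (ξn n (un n - u) - ξ (un n - u)) := by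
      simp only [hBdef]
      rw [mul_sub, ← smul_eq_mul, ← smul_eq_mul, ← map_smul, ← map_smul, h1]
      simp only [map_sub]
      ring
    have e1 : |ξn n (un n - u)| ≤ R ^ (p - 1) * ‖un n - u‖ :=
      le_trans ((ξn n).le_opNorm _) (mul_le_mul_of_nonneg_right (hK n) (norm_nonneg _))
    have e2 : |ξ (un n - u)| ≤ ‖ξ‖ * ‖un n - u‖ := ξ.le_opNorm _
    rw [h2, add_mul]
    have := hAle n
    linarith [neg_abs_le (ξn n (un n - u)), le_abs_self (ξ (un n - u)),
      neg_abs_le (ξ (un n - u))]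
  have hBtends : Tendsto B atTop (nhds 0) := by
    have hg : Tendsto (fun n => lam⁻¹ * ((R ^ (p - 1) + ‖ξ‖) * ‖un n - u‖)) atTop (nhds 0) := by
      have h0 := (((tendsto_iff_norm_sub_tendsto_zero.mp hun).const_mul
        (R ^ (p - 1) + ‖ξ‖)).const_mul lam⁻¹)
      simpa using h0
    apply squeeze_zero hBnonneg (fun n => ?_) hg
    have hx : B n = lam⁻¹ * (lam * B n) := by field_simp
    rw [hx]
    exact mul_le_mul_of_nonneg_left (hBle n) (inv_nonneg.2 hlam.le)
  -- step 3 : norm convergence and evaluation limits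
  have haD : Tendsto (fun n => (a n ^ (p - 1) - b ^ (p - 1)) * (a n - b)) atTop (nhds 0) := by
    apply squeeze_zero (fun n => ?_) (fun n => ?_) hBtends
    · rcases le_total (a n) b with h | h
      · have e1 : a n ^ (p - 1) - b ^ (p - 1) ≤ 0 := by
          simp only [sub_nonpos]; exact Real.rpow_le_rpow (ha0 n) h hq0.le
        have e2 : a n - b ≤ 0 := by linarith
        exact mul_nonneg_of_nonpos_of_nonpos e1 e2
      · apply mul_nonneg
        · simp only [sub_nonneg]; exact Real.rpow_le_rpow hb0 h hq0.le
        · linarith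
    · have hBeq : B n = a n ^ p + b ^ p - ξn n w - ξ (wn n) := by
        simp only [hBdef, map_sub, hξnw n, hξw]
        ring
      have e1 : ξn n w ≤ a n ^ (p - 1) * b := by
        calc ξn n w ≤ |ξn n w| := le_abs_self _
        _ ≤ ‖ξn n‖ * ‖w‖ := (ξn n).le_opNorm _
        _ = a n ^ (p - 1) * b := by rw [hξnnorm n]
      have e2 : ξ (wn n) ≤ b ^ (p - 1) * a n := by
        calc ξ (wn n) ≤ |ξ (wn n)| := le_abs_self _
        _ ≤ ‖ξ‖ * ‖wn n‖ := ξ.le_opNorm _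
        _ = b ^ (p - 1) * a n := by rw [hξnorm]
      have hsplit1 := rpow_split hp (ha0 n)
      have hsplit2 := rpow_split hp hb0
      rw [hBeq]
      nlinarith
  have haten : Tendsto a atTop (nhds b) :=
    seq_tendsto_of_prod hp hb0 ha0 haD
  have hap1 : Tendsto (fun n => a n ^ (p - 1)) atTop (nhds (b ^ (p - 1))) :=
    ((Real.continuousAt_rpow_const b (p - 1) (Or.inr hq0.le)).tendsto).comp haten
  have hap : Tendsto (fun n => a n ^ p) atTop (nhds (b ^ p)) :=
    ((Real.continuousAt_rpow_const b p (Or.inr hp0.le)).tendsto).comp haten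
  have hbsplit := rpow_split hp hb0
  have hS : Tendsto (fun n => ξn n w + ξ (wn n)) atTop (nhds (2 * b ^ p)) := by
    have heq : ∀ n, ξn n w + ξ (wn n) = a n ^ p + b ^ p - B n := by
      intro n
      simp only [hBdef, map_sub, hξnw n, hξw]
      ring
    have h0 : Tendsto (fun n => a n ^ p + b ^ p - B n) atTop (nhds (b ^ p + b ^ p - 0)) :=
      (hap.add tendsto_const_nhds).sub hBtends
    rw [(by ring : b ^ p + b ^ p - 0 = 2 * b ^ p)] at h0
    exact h0.congr (fun n => (heq n).symm)
  have hmulb : Tendsto (fun n => a n ^ (p - 1) * b) atTop (nhds (b ^ p)) := by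
    have h0 := hap1.mul_const b
    rwa [← hbsplit] at h0
  have hmulb' : Tendsto (fun n => b ^ (p - 1) * a n) atTop (nhds (b ^ p)) := by
    have h0 := haten.const_mul (b ^ (p - 1))
    rwa [← hbsplit] at h0
  have hxn : Tendsto (fun n => ξn n w) atTop (nhds (b ^ p)) := by
    apply tendsto_of_tendsto_of_tendsto_of_le_of_le'
      (g := fun n => (ξn n w + ξ (wn n)) - b ^ (p - 1) * a n)
      (h := fun n => a n ^ (p - 1) * b)
    · have h0 := hS.sub hmulb'
      rwa [(by ring : 2 * b ^ p - b ^ p = b ^ p)] at h0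
    · exact hmulb
    · filter_upwards with n
      have e2 : ξ (wn n) ≤ b ^ (p - 1) * a n := by
        calc ξ (wn n) ≤ |ξ (wn n)| := le_abs_self _
        _ ≤ ‖ξ‖ * ‖wn n‖ := ξ.le_opNorm _
        _ = b ^ (p - 1) * a n := by rw [hξnorm]
      linarith
    · filter_upwards with n
      calc ξn n w ≤ |ξn n w| := le_abs_self _
      _ ≤ ‖ξn n‖ * ‖w‖ := (ξn n).le_opNorm _
      _ = a n ^ (p - 1) * b := by rw [hξnnorm n]
  have hyn : Tendsto (fun n => ξ (wn n)) atTop (nhds (b ^ p)) := by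
    have h0 := hS.sub hxn
    rw [(by ring : 2 * b ^ p - b ^ p = b ^ p)] at h0
    exact h0.congr (fun n => by ring)
  -- step 4a : weak-* convergence of ξn
  have hxiconv : ∀ z : V, Tendsto (fun n => ξn n z) atTop (nhds (ξ z)) := by
    have hweak : Tendsto (fun n => StrongDual.toWeakDual (ξn n)) atTop
        (nhds (StrongDual.toWeakDual ξ)) := by
      rw [tendsto_iff_ultrafilter]
      intro U hU
      set T : ℕ → WeakDual ℝ V := fun n => StrongDual.toWeakDual (ξn n) with hTdef
      set s : Set (WeakDual ℝ V) := WeakDual.toStrongDual ⁻¹' Metric.closedBall 0 (R ^ (p - 1))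
        with hsdef
      have hcomp : IsCompact s := WeakDual.isCompact_closedBall (𝕜 := ℝ) (E := V) 0 (R ^ (p - 1))
      have hmem : ∀ n, StrongDual.toWeakDual (ξn n) ∈ s := by
        intro n
        simp only [hsdef, Set.mem_preimage, Metric.mem_closedBall, dist_zero_right]
        exact hK n
      have hUball : ↑(U.map T) ≤ 𝓟 s := by
        rw [Ultrafilter.coe_map]
        exact le_trans (map_mono hU) (le_principal_iff.2 (mem_map.mpr (Eventually.of_forall hmem)))
      obtain ⟨η, hηmem, hUη⟩ := hcomp.ultrafilter_le_nhds (U.map T) hUball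
      have hTη : Tendsto T ↑U (nhds η) := by
        have h0 := hUη; rw [Ultrafilter.coe_map] at h0; exact h0
      have heval : ∀ (y : V) (c : ℝ), Tendsto (fun n => ξn n y) atTop (nhds c) → η y = c := by
        intro y c hc
        have h1 : Tendsto (fun n => T n y) (↑U) (nhds (η y)) :=
          ((WeakDual.eval_continuous y).tendsto η).comp hTη
        have h2 : Tendsto (fun n => T n y) (↑U) (nhds c) := hc.mono_left hU
        exact tendsto_nhds_unique h1 h2
      have hηw : η w = b ^ p := heval w (b ^ p) hxn
      have hηbound : ∀ z : V, |η z| ≤ b ^ (p - 1) * ‖z‖ := by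
        intro z
        have hev : ∀ ε : ℝ, 0 < ε → |η z| ≤ b ^ (p - 1) * ‖z‖ + ε * ‖z‖ := by
          intro ε hε
          set t : Set (WeakDual ℝ V) := {ζ | |ζ z| ≤ (b ^ (p - 1) + ε) * ‖z‖} with htdef
          have htc : IsClosed t :=
            isClosed_le ((WeakDual.eval_continuous z).abs) continuous_const
          have hevent : ∀ᶠ n in atTop, StrongDual.toWeakDual (ξn n) ∈ t := by
            have h1 : ∀ᶠ n in atTop, a n ^ (p - 1) < b ^ (p - 1) + ε :=
              hap1.eventually_lt_const (by linarith)
            filter_upwards [h1] with n hn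
            show |ξn n z| ≤ (b ^ (p - 1) + ε) * ‖z‖
            calc |ξn n z| ≤ ‖ξn n‖ * ‖z‖ := (ξn n).le_opNorm _
            _ = a n ^ (p - 1) * ‖z‖ := by rw [hξnnorm n]
            _ ≤ (b ^ (p - 1) + ε) * ‖z‖ :=
              mul_le_mul_of_nonneg_right hn.le (norm_nonneg _)
          have hηt : η ∈ t :=
            htc.mem_of_tendsto hTη (hevent.filter_mono hU)
          have h2 : |η z| ≤ (b ^ (p - 1) + ε) * ‖z‖ := hηt
          nlinarith [h2]
        by_cases hz : z = 0
        · simp [hz]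
        · have hz0 : 0 < ‖z‖ := norm_pos_iff.2 hz
          apply _root_.le_of_forall_pos_le_add
          intro ε hε
          have h3 := hev (ε / ‖z‖) (by positivity)
          have heq : ε / ‖z‖ * ‖z‖ = ε := by field_simp
          linarith
      have hηnorm' : ‖WeakDual.toStrongDual η‖ ≤ b ^ (p - 1) :=
        ContinuousLinearMap.opNorm_le_bound _ (Real.rpow_nonneg hb0 _)
          (fun z => by rw [Real.norm_eq_abs]; exact hηbound z)
      have hfinal : WeakDual.toStrongDual η = ξ := by
        rcases eq_or_ne w 0 with hw0 | hw0
        · have hb' : b = 0 := by rw [hbdef, hw0, norm_zero]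
          have hξ0 : ξ = 0 := by
            have h4 : ‖ξ‖ = 0 := by
              rw [hξnorm, hb', Real.zero_rpow (ne_of_gt hq0)]
            exact norm_eq_zero.1 h4
          have hη0 : ‖WeakDual.toStrongDual η‖ ≤ 0 := by
            rw [hb', Real.zero_rpow (ne_of_gt hq0)] at hηnorm'
            exact hηnorm'
          rw [hξ0]
          exact norm_le_zero_iff.1 hη0
        · have hbpos : 0 < b := norm_pos_iff.2 hw0
          set f : (V →L[ℝ] ℝ) →L[ℝ] ℝ := NormedSpace.inclusionInDoubleDual ℝ V w with hfdef
          have hfapp : ∀ ζ : V →L[ℝ] ℝ, f ζ = ζ w := fun ζ => rfl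
          have hξpos : 0 < ‖ξ‖ := by rw [hξnorm]; positivity
          have hfnorm : ‖f‖ = b := by
            apply le_antisymm
            · exact NormedSpace.double_dual_bound ℝ V w
            · have h1 : f ξ ≤ ‖f‖ * ‖ξ‖ := le_trans (le_abs_self _) (f.le_opNorm ξ)
              rw [hfapp ξ, hξw, hξnorm] at h1
              have h2 : b ^ (p - 1) * b ≤ b ^ (p - 1) * ‖f‖ := by
                rw [← hbsplit]; linarith
              have hbp1 : 0 < b ^ (p - 1) := Real.rpow_pos_of_pos hbpos _
              exact le_of_mul_le_mul_left h2 hbp1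
          apply norming_eq f (x := ξ)
          · rw [hfapp ξ, hξw, hfnorm, hξnorm, hbsplit]; ring
          · rw [hfnorm, hξnorm]
            show η w = b * b ^ (p - 1)
            rw [hηw, hbsplit]; ring
          · rw [hξnorm]; exact hηnorm'
          · rw [hfnorm]; exact ne_of_gt hbpos
          · exact fun hcon => by simp [hcon] at hξpos
      have hηeq : η = StrongDual.toWeakDual ξ := by
        rw [← hfinal]; rfl
      rw [← hηeq]
      exact hTη
    intro z
    exact ((WeakDual.eval_continuous z).tendsto _).comp hweak
  -- step 4b : weak convergence of vn
  have hvconv : ∀ g : V →L[ℝ] ℝ, Tendsto (fun n => g (vn n)) atTop (nhds (g v)) := by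
    have hweak : Tendsto
        (fun n => StrongDual.toWeakDual (NormedSpace.inclusionInDoubleDual ℝ V (wn n)))
        atTop (nhds (StrongDual.toWeakDual (NormedSpace.inclusionInDoubleDual ℝ V w))) := by
      rw [tendsto_iff_ultrafilter]
      intro U hU
      set T : ℕ → WeakDual ℝ (StrongDual ℝ V) :=
        fun n => StrongDual.toWeakDual (NormedSpace.inclusionInDoubleDual ℝ V (wn n))
        with hTdef
      set s : Set (WeakDual ℝ (StrongDual ℝ V)) :=
        WeakDual.toStrongDual ⁻¹' Metric.closedBall 0 R with hsdef
      have hcomp : IsCompact s := WeakDual.isCompact_closedBall (𝕜 := ℝ) (E := StrongDual ℝ V) 0 R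
      have hmem : ∀ n,
          StrongDual.toWeakDual (NormedSpace.inclusionInDoubleDual ℝ V (wn n)) ∈ s := by
        intro n
        simp only [hsdef, Set.mem_preimage, Metric.mem_closedBall, dist_zero_right]
        exact le_trans (le_of_eq (dist_zero_right ((NormedSpace.inclusionInDoubleDual ℝ V) (wn n)))) (le_trans (NormedSpace.double_dual_bound ℝ V (wn n)) (hRn n))
      have hUball : ↑(U.map T) ≤ 𝓟 s := by
        rw [Ultrafilter.coe_map]
        exact le_trans (map_mono hU) (le_principal_iff.2 (mem_map.mpr (Eventually.of_forall hmem)))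
      obtain ⟨Φ, hΦmem, hUΦ⟩ := hcomp.ultrafilter_le_nhds (U.map T) hUball
      have hTΦ : Tendsto T ↑U (nhds Φ) := by
        have h0 := hUΦ; rw [Ultrafilter.coe_map] at h0; exact h0
      have heval : ∀ (f : V →L[ℝ] ℝ) (c : ℝ),
          Tendsto (fun n => f (wn n)) atTop (nhds c) → Φ f = c := by
        intro f c hc
        have h1 : Tendsto (fun n => T n f) (↑U) (nhds (Φ f)) :=
          ((WeakDual.eval_continuous f).tendsto Φ).comp hTΦ
        have h2 : Tendsto (fun n => T n f) (↑U) (nhds c) := hc.mono_left hU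
        exact tendsto_nhds_unique h1 h2
      obtain ⟨wb, hwb⟩ := hrefl (WeakDual.toStrongDual Φ)
      have hwbeval : ∀ f : V →L[ℝ] ℝ, f wb = Φ f := by
        intro f
        have h0 : NormedSpace.inclusionInDoubleDual ℝ V wb f
            = (WeakDual.toStrongDual Φ) f := by rw [hwb]
        exact h0
      have hΦξ : ξ wb = b ^ p := by rw [hwbeval ξ]; exact heval ξ (b ^ p) hyn
      have hwbnorm : ‖wb‖ ≤ b := by
        rcases eq_or_ne wb 0 with h0 | h0
        · rw [h0, norm_zero]; exact hb0
        · obtain ⟨f, hf1, hf2⟩ := exists_dual_vector ℝ wb (norm_ne_zero_iff.2 h0)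
          apply _root_.le_of_forall_pos_le_add
          intro ε hε
          set t : Set (WeakDual ℝ (StrongDual ℝ V)) := {Ψ | |Ψ f| ≤ b + ε} with htdef
          have htc : IsClosed t :=
            isClosed_le ((WeakDual.eval_continuous f).abs) continuous_const
          have hevent : ∀ᶠ n in atTop,
              StrongDual.toWeakDual (NormedSpace.inclusionInDoubleDual ℝ V (wn n)) ∈ t := by
            have h1 : ∀ᶠ n in atTop, a n < b + ε := haten.eventually_lt_const (by linarith)
            filter_upwards [h1] with n hn
            show |f (wn n)| ≤ b + ε
            calc |f (wn n)| ≤ ‖f‖ * ‖wn n‖ := f.le_opNorm _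
            _ = a n := by rw [hf1, one_mul]
            _ ≤ b + ε := hn.le
          have hΦt : Φ ∈ t := htc.mem_of_tendsto hTΦ (hevent.filter_mono hU)
          have h2 : |Φ f| ≤ b + ε := hΦt
          rw [← hwbeval f] at h2
          calc ‖wb‖ = f wb := by rw [hf2]; simp
          _ ≤ |f wb| := le_abs_self _
          _ ≤ b + ε := h2
      have hwbw : wb = w := by
        rcases eq_or_ne w 0 with hw0 | hw0
        · have hb' : b = 0 := by rw [hbdef, hw0, norm_zero]
          rw [hw0]
          have h3 : ‖wb‖ ≤ 0 := by rw [← hb']; exact hwbnorm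
          exact norm_le_zero_iff.1 h3
        · have hbpos : 0 < b := norm_pos_iff.2 hw0
          have hξpos : 0 < ‖ξ‖ := by rw [hξnorm]; positivity
          apply norming_eq ξ (x := w) (y := wb)
          · rw [hξw, hξnorm, hbsplit]
          · rw [hΦξ, hξnorm]
            show b ^ p = b ^ (p - 1) * b
            exact hbsplit
          · exact hwbnorm
          · exact ne_of_gt hξpos
          · exact hw0
      have hΦeq : Φ = StrongDual.toWeakDual (NormedSpace.inclusionInDoubleDual ℝ V w) := by
        have h4 : WeakDual.toStrongDual Φ = NormedSpace.inclusionInDoubleDual ℝ V w := by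
          rw [← hwb, hwbw]
        rw [← h4]; rfl
      rw [← hΦeq]
      exact hTΦ
    intro g
    have h1 : Tendsto (fun n => g (wn n)) atTop (nhds (g w)) :=
      ((WeakDual.eval_continuous g).tendsto _).comp hweak
    have h2 : Tendsto (fun n => g (un n)) atTop (nhds (g u)) :=
      (g.continuous.tendsto u).comp hun
    have h3 : Tendsto (fun n => g (un n) + lam * g (wn n)) atTop (nhds (g u + lam * g w)) :=
      h2.add (h1.const_mul lam)
    have heq : ∀ n, g (vn n) = g (un n) + lam * g (wn n) := by
      intro n; rw [hvn n, map_add, map_smul, smul_eq_mul]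
    have heq2 : g v = g u + lam * g w := by rw [hv, map_add, map_smul, smul_eq_mul]
    rw [heq2]
    exact h3.congr (fun n => (heq n).symm)
  exact ⟨hvconv, hxiconv⟩
end
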